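/- Let E be a real inner product space, θ ≥ 0 a real number, v ∈ E, and x₁, …, xₙ ∈ E. Define w := v + θ • ∑ⱼ ⟪v, xⱼ⟫ • xⱼ. Then w = 0 if and only if v = 0. -/
import Mathlib


open scoped RealInnerProductSpace

theorem stmt1 {E : Type*} [NormedAddCommGroup E] [InnerProductSpace ℝ E]
    (θ : ℝ) (hθ : 0 ≤ θ) (v : E) {n : ℕ} (x : Fin n → E) (w : E)
    (hw : w = v + θ • ∑ j, ⟪v, x j⟫ • x j) :
    w = 0 ↔ v = 0 := by
  constructor
  · intro h0
    have key : ⟪v, w⟫ = ‖v‖ ^ 2 + θ * ∑ j, ⟪v, x j⟫ ^ 2 := by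
      simp [hw, inner_add_right, inner_smul_right, inner_sum, real_inner_self_eq_norm_sq, sq]
    rw [h0, inner_zero_right] at key
    have h1 : 0 ≤ θ * ∑ j, ⟪v, x j⟫ ^ 2 :=
      mul_nonneg hθ (Finset.sum_nonneg fun j _ => sq_nonneg _)
    have h2 : ‖v‖ ^ 2 ≤ 0 := by linarith
    have : ‖v‖ = 0 := by nlinarith [norm_nonneg v]
    simpa using this
  · intro h0
    simp [hw, h0]
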